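/- arXiv:2004.13779 — 2 statements merged into one kernel-verified Lean document; each statement's English description precedes it below -/
import Mathlib

section
/- Let φ(t) = -((k+d)/2)·log(1 + t/k) for t ≥ 0, where k > 0 and d ≥ 1 (the log-density generator of the multivariate t-distribution). Then φ'(t) < 0 for all t ≥ 0, and t·φ''(t)/φ'(t) = -t/(k+t). Consequently there is no ρ ∈ [0,1) such that -ρ/(1+ρ) ≤ -t/(k+t) ≤ ρ/(1-ρ) holds for all t ≥ 0. -/
/-- For the log-density generator of the multivariate t-distribution,
`φ(t) = -((k+d)/2)·log(1+t/k)`: `φ' < 0` on `[0,∞)`, `t·φ''(t)/φ'(t) = -t/(k+t)`,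
and no `ρ ∈ [0,1)` satisfies `-ρ/(1+ρ) ≤ -t/(k+t) ≤ ρ/(1-ρ)` for all `t ≥ 0`. -/
theorem stmt_6 (k : ℝ) (hk : 0 < k) (d : ℕ) (hd : 1 ≤ d)
    (φ : ℝ → ℝ) (hφ : ∀ t, φ t = -((k + d) / 2) * Real.log (1 + t / k)) :
    (∀ t : ℝ, 0 ≤ t → deriv φ t < 0) ∧
    (∀ t : ℝ, 0 ≤ t → t * deriv (deriv φ) t / deriv φ t = -t / (k + t)) ∧
    ¬ ∃ ρ : ℝ, 0 ≤ ρ ∧ ρ < 1 ∧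
      ∀ t : ℝ, 0 ≤ t → (-ρ / (1 + ρ) ≤ -t / (k + t) ∧ -t / (k + t) ≤ ρ / (1 - ρ)) := by
  set c : ℝ := (k + d) / 2 with hc_def
  have hd1 : (1 : ℝ) ≤ (d : ℝ) := by exact_mod_cast hd
  have hc : 0 < c := by rw [hc_def]; linarith
  have hφeq : φ = fun t => -c * Real.log (1 + t / k) := funext hφ
  -- derivative of φ on (-k, ∞)
  have hderiv : ∀ t : ℝ, -k < t → HasDerivAt φ (-c * (k + t)⁻¹) t := by
    intro t ht
    have hkt : 0 < k + t := by linarith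
    have hg : HasDerivAt (fun t : ℝ => 1 + t / k) (1 / k) t := by
      simpa using ((hasDerivAt_id t).div_const k).const_add 1
    have hpos : 0 < 1 + t / k := by
      have := div_pos hkt hk
      have : 0 < (k + t) / k := this
      rw [add_div] at this
      simpa [div_self hk.ne'] using this
    have hlog : HasDerivAt (fun t : ℝ => Real.log (1 + t / k)) ((1 + t / k)⁻¹ * (1 / k)) t :=
      by have := (Real.hasDerivAt_log hpos.ne').comp t hg; exact this
    have := hlog.const_mul (-c)
    rw [hφeq]
    refine this.congr_deriv ?_
    field_simp
  have hderiv_eq : ∀ t : ℝ, -k < t → deriv φ t = -c * (k + t)⁻¹ := fun t ht => (hderiv t ht).deriv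
  -- second derivative
  have hderiv2 : ∀ t : ℝ, -k < t → deriv (deriv φ) t = c * ((k + t)^2)⁻¹ := by
    intro t ht
    have hkt : 0 < k + t := by linarith
    have hEq : deriv φ =ᶠ[nhds t] fun s => -c * (k + s)⁻¹ := by
      filter_upwards [isOpen_Ioi.mem_nhds (show t ∈ Set.Ioi (-k) from ht)] with s hs
      exact hderiv_eq s hs
    rw [hEq.deriv_eq]
    have hinv : HasDerivAt (fun s : ℝ => (k + s)⁻¹) (-1 / (k + t)^2) t := by
      have h1 : HasDerivAt (fun s : ℝ => k + s) 1 t := (hasDerivAt_id t).const_add k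
      simpa using h1.fun_inv hkt.ne'
    have := (hinv.const_mul (-c)).deriv
    rw [this]; field_simp
  refine ⟨?_, ?_, ?_⟩
  · intro t ht
    have hkt : 0 < k + t := by linarith
    rw [hderiv_eq t (by linarith)]
    have : 0 < c * (k + t)⁻¹ := mul_pos hc (inv_pos.mpr hkt)
    linarith
  · intro t ht
    have hkt : 0 < k + t := by linarith
    rw [hderiv_eq t (by linarith), hderiv2 t (by linarith)]
    field_simp
  · rintro ⟨ρ, hρ0, hρ1, h⟩
    have := (h k hk.le).1
    have hkk : k + k ≠ 0 := by positivity
    have h2 : -ρ / (1 + ρ) ≤ -(1/2) := by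
      have : -k / (k + k) = -(1/2) := by field_simp; ring
      linarith [this ▸ this ▸ (h k hk.le).1, (h k hk.le).1, this]
    have hρpos : 0 < 1 + ρ := by linarith
    rw [div_le_iff₀ hρpos] at h2
    linarith
end

section
/- Let τ be a positive random variable with E(1/τ²) < ∞ and Var(1/τ) < ∞, and let (Z_i, Z_j) be a bivariate centered Gaussian vector with unit variances and correlation ρ, independent of τ. Set X_i = Z_i/√τ and X_j = Z_j/√τ. Then corr(X_i², X_j²) = λ + (1-λ)ρ², where λ = Var(1/τ)/(Var(1/τ) + 2E(1/τ²)). In particular λ ∈ [0,1], and λ = 0 if and only if 1/τ is almost surely constant (the Gaussian case). -/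
open MeasureTheory

/-- Scale mixture of normals: if `X_i = Z_i/√τ`, `X_j = Z_j/√τ` where `(Z_i,Z_j)`
is a centered bivariate Gaussian with unit variances and correlation `ρ`
(encoded through its moments, including Isserlis' `E(Z_i²Z_j²) = 1+2ρ²`),
independent of `τ > 0`, then `corr(X_i², X_j²) = λ + (1-λ)ρ²` with
`λ = Var(1/τ)/(Var(1/τ) + 2E(1/τ²)) ∈ [0,1]`, and `λ = 0` iff `1/τ` is a.s.
constant. -/
theorem stmt_16 {Ω : Type*} [MeasurableSpace Ω] (μ : Measure Ω)
    [IsProbabilityMeasure μ]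
    (τ Zi Zj : Ω → ℝ) (hτ : Measurable τ) (hZi : Measurable Zi)
    (hZj : Measurable Zj) (ρ : ℝ)
    (hτpos : ∀ᵐ ω ∂μ, 0 < τ ω)
    (hindep : ProbabilityTheory.IndepFun (fun ω => (Zi ω, Zj ω)) τ μ)
    -- moments of the centered bivariate Gaussian (Z_i, Z_j):
    (hZi0 : ∫ ω, Zi ω ∂μ = 0) (hZj0 : ∫ ω, Zj ω ∂μ = 0)
    (hZi2 : ∫ ω, (Zi ω) ^ 2 ∂μ = 1) (hZj2 : ∫ ω, (Zj ω) ^ 2 ∂μ = 1)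
    (hZiZj : ∫ ω, Zi ω * Zj ω ∂μ = ρ)
    (hIsserlis : ∫ ω, (Zi ω) ^ 2 * (Zj ω) ^ 2 ∂μ = 1 + 2 * ρ ^ 2)
    (hZi4 : ∫ ω, (Zi ω) ^ 4 ∂μ = 3) (hZj4 : ∫ ω, (Zj ω) ^ 4 ∂μ = 3)
    -- integrability assumptions:
    (hτ2 : MemLp (fun ω => 1 / τ ω) 2 μ)
    (hZ4 : MemLp Zi 4 μ) (hZ4' : MemLp Zj 4 μ)
    (Xi Xj : Ω → ℝ)
    (hXi : ∀ ω, Xi ω = Zi ω / Real.sqrt (τ ω))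
    (hXj : ∀ ω, Xj ω = Zj ω / Real.sqrt (τ ω))
    (hint1 : Integrable (fun ω => (Xi ω) ^ 2 * (Xj ω) ^ 2) μ)
    (hint2 : MemLp (fun ω => (Xi ω) ^ 2) 2 μ)
    (hint3 : MemLp (fun ω => (Xj ω) ^ 2) 2 μ)
    (lam : ℝ)
    (hlam : lam = (∫ ω, (1 / τ ω) ^ 2 ∂μ - (∫ ω, 1 / τ ω ∂μ) ^ 2) /
      ((∫ ω, (1 / τ ω) ^ 2 ∂μ - (∫ ω, 1 / τ ω ∂μ) ^ 2)
        + 2 * ∫ ω, (1 / τ ω) ^ 2 ∂μ)) :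
    ((∫ ω, (Xi ω) ^ 2 * (Xj ω) ^ 2 ∂μ
        - (∫ ω, (Xi ω) ^ 2 ∂μ) * (∫ ω, (Xj ω) ^ 2 ∂μ)) /
      (Real.sqrt (∫ ω, (Xi ω) ^ 4 ∂μ - (∫ ω, (Xi ω) ^ 2 ∂μ) ^ 2) *
       Real.sqrt (∫ ω, (Xj ω) ^ 4 ∂μ - (∫ ω, (Xj ω) ^ 2 ∂μ) ^ 2))
      = lam + (1 - lam) * ρ ^ 2) ∧
    0 ≤ lam ∧ lam ≤ 1 ∧
    (lam = 0 ↔ (fun ω => 1 / τ ω) =ᵐ[μ] fun _ => ∫ ω, 1 / τ ω ∂μ) := by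
  -- notation
  set m1 : ℝ := ∫ ω, 1 / τ ω ∂μ with hm1
  set m2 : ℝ := ∫ ω, (1 / τ ω) ^ 2 ∂μ with hm2
  have hfm : Measurable fun ω => 1 / τ ω := measurable_const.div hτ
  have hfint : Integrable (fun ω => 1 / τ ω) μ := hτ2.integrable one_le_two
  have hf2int : Integrable (fun ω => (1 / τ ω) ^ 2) μ := hτ2.integrable_sq
  -- independence consequences
  have hI1 : ProbabilityTheory.IndepFun (fun ω => Zi ω ^ 2) (fun ω => 1 / τ ω) μ :=
    hindep.comp (measurable_fst.pow_const 2) (measurable_const.div measurable_id)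
  have hI2 : ProbabilityTheory.IndepFun (fun ω => Zj ω ^ 2) (fun ω => 1 / τ ω) μ :=
    hindep.comp (measurable_snd.pow_const 2) (measurable_const.div measurable_id)
  have hI3 : ProbabilityTheory.IndepFun (fun ω => Zi ω ^ 2 * Zj ω ^ 2)
      (fun ω => (1 / τ ω) ^ 2) μ :=
    hindep.comp ((measurable_fst.pow_const 2).mul (measurable_snd.pow_const 2))
      ((measurable_const.div measurable_id).pow_const 2)
  have hI4 : ProbabilityTheory.IndepFun (fun ω => Zi ω ^ 4) (fun ω => (1 / τ ω) ^ 2) μ :=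
    hindep.comp (measurable_fst.pow_const 4) ((measurable_const.div measurable_id).pow_const 2)
  have hI5 : ProbabilityTheory.IndepFun (fun ω => Zj ω ^ 4) (fun ω => (1 / τ ω) ^ 2) μ :=
    hindep.comp (measurable_snd.pow_const 4) ((measurable_const.div measurable_id).pow_const 2)
  -- pointwise a.e. identities
  have haeXi : (fun ω => Xi ω ^ 2) =ᵐ[μ] fun ω => Zi ω ^ 2 * (1 / τ ω) := by
    filter_upwards [hτpos] with ω h
    rw [hXi, div_pow, Real.sq_sqrt h.le, mul_one_div]
  have haeXj : (fun ω => Xj ω ^ 2) =ᵐ[μ] fun ω => Zj ω ^ 2 * (1 / τ ω) := by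
    filter_upwards [hτpos] with ω h
    rw [hXj, div_pow, Real.sq_sqrt h.le, mul_one_div]
  have haeP : (fun ω => Xi ω ^ 2 * Xj ω ^ 2)
      =ᵐ[μ] fun ω => (Zi ω ^ 2 * Zj ω ^ 2) * (1 / τ ω) ^ 2 := by
    filter_upwards [haeXi, haeXj] with ω h1 h2
    rw [h1, h2]; ring
  have haeXi4 : (fun ω => Xi ω ^ 4) =ᵐ[μ] fun ω => Zi ω ^ 4 * (1 / τ ω) ^ 2 := by
    filter_upwards [haeXi] with ω h
    have : Xi ω ^ 4 = (Xi ω ^ 2) ^ 2 := by ring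
    rw [this, h]; ring
  have haeXj4 : (fun ω => Xj ω ^ 4) =ᵐ[μ] fun ω => Zj ω ^ 4 * (1 / τ ω) ^ 2 := by
    filter_upwards [haeXj] with ω h
    have : Xj ω ^ 4 = (Xj ω ^ 2) ^ 2 := by ring
    rw [this, h]; ring
  -- moment computations
  have e1 : ∫ ω, Xi ω ^ 2 ∂μ = m1 := by
    rw [integral_congr_ae haeXi]
    calc ∫ ω, Zi ω ^ 2 * (1 / τ ω) ∂μ
        = (∫ ω, Zi ω ^ 2 ∂μ) * ∫ ω, 1 / τ ω ∂μ :=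
          hI1.integral_mul_eq_mul_integral (hZi.pow_const 2).aestronglyMeasurable hfm.aestronglyMeasurable
      _ = m1 := by rw [hZi2, one_mul]
  have e2 : ∫ ω, Xj ω ^ 2 ∂μ = m1 := by
    rw [integral_congr_ae haeXj]
    calc ∫ ω, Zj ω ^ 2 * (1 / τ ω) ∂μ
        = (∫ ω, Zj ω ^ 2 ∂μ) * ∫ ω, 1 / τ ω ∂μ :=
          hI2.integral_mul_eq_mul_integral (hZj.pow_const 2).aestronglyMeasurable hfm.aestronglyMeasurable
      _ = m1 := by rw [hZj2, one_mul]
  have e3 : ∫ ω, Xi ω ^ 2 * Xj ω ^ 2 ∂μ = (1 + 2 * ρ ^ 2) * m2 := by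
    rw [integral_congr_ae haeP]
    calc ∫ ω, Zi ω ^ 2 * Zj ω ^ 2 * (1 / τ ω) ^ 2 ∂μ
        = (∫ ω, Zi ω ^ 2 * Zj ω ^ 2 ∂μ) * ∫ ω, (1 / τ ω) ^ 2 ∂μ :=
          hI3.integral_mul_eq_mul_integral ((hZi.pow_const 2).mul (hZj.pow_const 2)).aestronglyMeasurable
            (hfm.pow_const 2).aestronglyMeasurable
      _ = (1 + 2 * ρ ^ 2) * m2 := by rw [hIsserlis]
  have e4 : ∫ ω, Xi ω ^ 4 ∂μ = 3 * m2 := by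
    rw [integral_congr_ae haeXi4]
    calc ∫ ω, Zi ω ^ 4 * (1 / τ ω) ^ 2 ∂μ
        = (∫ ω, Zi ω ^ 4 ∂μ) * ∫ ω, (1 / τ ω) ^ 2 ∂μ :=
          hI4.integral_mul_eq_mul_integral (hZi.pow_const 4).aestronglyMeasurable
            (hfm.pow_const 2).aestronglyMeasurable
      _ = 3 * m2 := by rw [hZi4]
  have e5 : ∫ ω, Xj ω ^ 4 ∂μ = 3 * m2 := by
    rw [integral_congr_ae haeXj4]
    calc ∫ ω, Zj ω ^ 4 * (1 / τ ω) ^ 2 ∂μ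
        = (∫ ω, Zj ω ^ 4 ∂μ) * ∫ ω, (1 / τ ω) ^ 2 ∂μ :=
          hI5.integral_mul_eq_mul_integral (hZj.pow_const 4).aestronglyMeasurable
            (hfm.pow_const 2).aestronglyMeasurable
      _ = 3 * m2 := by rw [hZj4]
  -- variance of 1/τ
  have hvint : Integrable (fun ω => (1 / τ ω - m1) ^ 2) μ := by
    have : Integrable (fun ω => (1 / τ ω) ^ 2 - 2 * m1 * (1 / τ ω) + m1 ^ 2) μ :=
      (hf2int.sub (hfint.const_mul (2 * m1))).add (integrable_const _)
    exact this.congr (ae_of_all _ fun ω => by ring)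
  have hvar : ∫ ω, (1 / τ ω - m1) ^ 2 ∂μ = m2 - m1 ^ 2 := by
    have hpt : ∀ ω, (1 / τ ω - m1) ^ 2
        = (1 / τ ω) ^ 2 - 2 * m1 * (1 / τ ω) + m1 ^ 2 := fun ω => by ring
    simp_rw [hpt]
    have hA : Integrable (fun ω => (1 / τ ω) ^ 2 - 2 * m1 * (1 / τ ω)) μ := by
      have := hf2int.sub (hfint.const_mul (2 * m1))
      exact this.congr (ae_of_all _ fun ω => rfl)
    rw [integral_add hA (integrable_const _), integral_sub hf2int (hfint.const_mul (2 * m1)),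
      integral_const_mul, integral_const]
    simp only [measure_univ, probReal_univ, ENNReal.toReal_one, smul_eq_mul, one_mul, one_smul]
    rw [← hm1, ← hm2]
    ring
  have hv0 : 0 ≤ m2 - m1 ^ 2 := hvar ▸ integral_nonneg fun ω => sq_nonneg _
  have hm2pos : 0 < m2 := by
    rcases lt_or_eq_of_le (integral_nonneg (fun ω => sq_nonneg (1 / τ ω)) : (0:ℝ) ≤ m2) with h | h
    · exact h
    · exfalso
      have hzero : (fun ω => (1 / τ ω) ^ 2) =ᵐ[μ] 0 := by
        rw [← integral_eq_zero_iff_of_nonneg (fun ω => sq_nonneg _) hf2int]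
        exact h.symm
      obtain ⟨ω, h0, hp⟩ := (hzero.and hτpos).exists
      have : (1 : ℝ) / τ ω > 0 := by positivity
      simp only [Pi.zero_apply] at h0
      nlinarith
  have hD : 0 < (m2 - m1 ^ 2) + 2 * m2 := by linarith
  have hDne : (m2 - m1 ^ 2) + 2 * m2 ≠ 0 := ne_of_gt hD
  refine ⟨?_, ?_, ?_, ?_⟩
  · have h4 : ∫ ω, Xi ω ^ 4 ∂μ - (∫ ω, Xi ω ^ 2 ∂μ) ^ 2 = (m2 - m1 ^ 2) + 2 * m2 := by
      rw [e4, e1]; ring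
    have h5 : ∫ ω, Xj ω ^ 4 ∂μ - (∫ ω, Xj ω ^ 2 ∂μ) ^ 2 = (m2 - m1 ^ 2) + 2 * m2 := by
      rw [e5, e2]; ring
    rw [h4, h5, e1, e2, e3, Real.mul_self_sqrt hD.le, hlam]
    field_simp
    ring
  · rw [hlam]
    exact div_nonneg hv0 hD.le
  · rw [hlam, div_le_one hD]
    linarith
  · rw [hlam, div_eq_zero_iff]
    constructor
    · intro h
      have hv : m2 - m1 ^ 2 = 0 := h.resolve_right hDne
      have : ∫ ω, (1 / τ ω - m1) ^ 2 ∂μ = 0 := by rw [hvar, hv]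
      have hz : (fun ω => (1 / τ ω - m1) ^ 2) =ᵐ[μ] 0 :=
        (integral_eq_zero_iff_of_nonneg (fun ω => sq_nonneg _) hvint).mp this
      filter_upwards [hz] with ω hω
      have : (1 / τ ω - m1) ^ 2 = 0 := hω
      have := pow_eq_zero_iff (two_ne_zero) |>.mp this
      simpa [sub_eq_zero] using this
    · intro h
      left
      have : ∫ ω, (1 / τ ω - m1) ^ 2 ∂μ = 0 := by
        rw [integral_eq_zero_iff_of_nonneg (fun ω => sq_nonneg _) hvint]
        filter_upwards [h] with ω hω
        simp [hω]
      linarith [hvar ▸ this]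
end
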